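/- For m, k, n, l ∈ ℕ₀ with 0 ≤ k < 2^m, 0 ≤ l < 2^n, and t ∈ [0,1], one has ∫₀ᵗ H_{n,l}(u) e_{m,k}(u) du = 2^{n/2} ( 2 I²_{0+}H_{m,k}(t ∧ (l+0.5)/2^n) − I²_{0+}H_{m,k}(t ∧ l/2^n) − I²_{0+}H_{m,k}(t ∧ (l+1)/2^n) ), where I²_{0+} denotes the second-order iterated integral. -/

import Mathlib

open MeasureTheory Set

/-- The Haar function `H_{m,k}`. -/
noncomputable def Haar (m k : ℕ) (s : ℝ) : ℝ :=
  if s ∈ Set.Ioc ((k : ℝ) / 2 ^ m) (((k : ℝ) + 0.5) / 2 ^ m) then (2 : ℝ) ^ ((m : ℝ) / 2)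
  else if s ∈ Set.Ioc (((k : ℝ) + 0.5) / 2 ^ m) (((k : ℝ) + 1) / 2 ^ m) then
    -(2 : ℝ) ^ ((m : ℝ) / 2)
  else 0

/-- The Faber–Schauder function `e_{m,k}`, as the primitive of the Haar function. -/
noncomputable def FS (m k : ℕ) (t : ℝ) : ℝ := ∫ s in (0 : ℝ)..t, Haar m k s

/-- The second-order iterated integral `I²_{0+}`. -/
noncomputable def I2 (f : ℝ → ℝ) (t : ℝ) : ℝ := ∫ u in (0 : ℝ)..t, (t - u) * f u

lemma haar_measurable (m k : ℕ) : Measurable (Haar m k) := by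
  unfold Haar
  exact (Measurable.ite measurableSet_Ioc measurable_const
    (Measurable.ite measurableSet_Ioc measurable_const measurable_const))

lemma haar_bound (m k : ℕ) (s : ℝ) : |Haar m k s| ≤ (2:ℝ) ^ ((m:ℝ)/2) := by
  unfold Haar
  have h : (0:ℝ) ≤ (2:ℝ) ^ ((m:ℝ)/2) := by positivity
  split_ifs <;> simp [abs_of_nonneg h, abs_neg, h]

lemma haar_intervalIntegrable (m k : ℕ) (a b : ℝ) :
    IntervalIntegrable (Haar m k) volume a b := by
  apply IntervalIntegrable.mono_fun' (g := fun _ => (2:ℝ) ^ ((m:ℝ)/2))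
    intervalIntegrable_const (haar_measurable m k).aestronglyMeasurable
  exact Filter.Eventually.of_forall fun s => by
    simpa [Real.norm_eq_abs] using haar_bound m k s

lemma fs_continuous (m k : ℕ) : Continuous (FS m k) :=
  intervalIntegral.continuous_primitive (fun a b => haar_intervalIntegrable m k a b) 0

lemma key (m k : ℕ) (x : ℝ) (hx : 0 ≤ x) :
    ∫ u in (0:ℝ)..x, FS m k u = I2 (Haar m k) x := by
  rw [intervalIntegral.integral_of_le hx, I2, intervalIntegral.integral_of_le hx]
  have hmeas : Measurable (Function.uncurry fun u s => (Ioc (0:ℝ) u).indicator (Haar m k) s) := by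
    have : Function.uncurry (fun u s => (Ioc (0:ℝ) u).indicator (Haar m k) s)
        = ({p : ℝ × ℝ | 0 < p.2 ∧ p.2 ≤ p.1}).indicator (fun p => Haar m k p.2) := by
      ext p
      simp [Function.uncurry, Set.indicator, Set.mem_Ioc]
    rw [this]
    exact ((haar_measurable m k).comp measurable_snd).indicator
      ((measurableSet_lt measurable_const measurable_snd).inter
        (measurableSet_le measurable_snd measurable_fst))
  have hint : Integrable (Function.uncurry fun u s => (Ioc (0:ℝ) u).indicator (Haar m k) s)
      ((volume.restrict (Ioc (0:ℝ) x)).prod (volume.restrict (Ioc (0:ℝ) x))) := by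
    apply Integrable.mono' (g := fun _ => (2:ℝ) ^ ((m:ℝ)/2)) (integrable_const _)
      hmeas.aestronglyMeasurable
    refine Filter.Eventually.of_forall fun p => ?_
    simp only [Function.uncurry, Real.norm_eq_abs, Set.indicator]
    split_ifs
    · exact haar_bound m k p.2
    · simpa using Real.rpow_nonneg (by norm_num : (0:ℝ) ≤ 2) _
  calc ∫ u in Ioc (0:ℝ) x, FS m k u
      = ∫ u in Ioc (0:ℝ) x, ∫ s in Ioc (0:ℝ) x, (Ioc (0:ℝ) u).indicator (Haar m k) s := by
        apply setIntegral_congr_fun measurableSet_Ioc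
        intro u hu
        dsimp only
        rw [setIntegral_indicator measurableSet_Ioc]
        have : Ioc (0:ℝ) x ∩ Ioc (0:ℝ) u = Ioc 0 u := by
          rw [Set.Ioc_inter_Ioc]
          simp [min_eq_right hu.2]
        rw [this, FS, intervalIntegral.integral_of_le hu.1.le]
    _ = ∫ s in Ioc (0:ℝ) x, ∫ u in Ioc (0:ℝ) x, (Ioc (0:ℝ) u).indicator (Haar m k) s :=
        integral_integral_swap hint
    _ = ∫ s in Ioc (0:ℝ) x, (x - s) * Haar m k s := by
        apply setIntegral_congr_fun measurableSet_Ioc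
        intro s hs
        dsimp only
        have h1 : (fun u => (Ioc (0:ℝ) u).indicator (Haar m k) s)
            = (Ici s).indicator (fun _ => Haar m k s) := by
          ext u
          simp only [Set.indicator, Set.mem_Ioc, Set.mem_Ici]
          by_cases h : s ≤ u
          · simp [h, hs.1]
          · simp [h]
        rw [h1, setIntegral_indicator measurableSet_Ici]
        have h2 : Ioc (0:ℝ) x ∩ Ici s = Icc s x := by
          ext u
          simp only [Set.mem_inter_iff, Set.mem_Ioc, Set.mem_Ici, Set.mem_Icc]
          constructor
          · rintro ⟨⟨_, h2⟩, h3⟩; exact ⟨h3, h2⟩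
          · rintro ⟨h1, h2⟩; exact ⟨⟨lt_of_lt_of_le hs.1 h1, h2⟩, h1⟩
        rw [h2, setIntegral_const, measureReal_def, Real.volume_Icc, smul_eq_mul,
          ENNReal.toReal_ofReal (by linarith [hs.2] : (0:ℝ) ≤ x - s)]

lemma step (m k : ℕ) (a b t : ℝ) (ha : 0 ≤ a) (hab : a ≤ b) (ht : 0 ≤ t) :
    ∫ u in (0:ℝ)..t, (Ioc a b).indicator (FS m k) u
      = (∫ u in (0:ℝ)..(min t b), FS m k u) - ∫ u in (0:ℝ)..(min t a), FS m k u := by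
  rw [intervalIntegral.integral_of_le ht, setIntegral_indicator measurableSet_Ioc]
  have hI : Ioc (0:ℝ) t ∩ Ioc a b = Ioc a (min t b) := by
    rw [Set.Ioc_inter_Ioc, max_eq_right ha]
  rw [hI]
  rcases le_or_gt a t with h | h
  · have h1 : min t a = a := min_eq_right h
    have h2 : a ≤ min t b := le_min h hab
    rw [h1, ← intervalIntegral.integral_of_le h2]
    rw [← intervalIntegral.integral_interval_sub_left
      ((fs_continuous m k).intervalIntegrable _ _) ((fs_continuous m k).intervalIntegrable _ _)]
  · have h1 : min t a = t := min_eq_left h.le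
    have h2 : min t b = t := min_eq_left (h.le.trans hab)
    rw [h1, h2, Set.Ioc_eq_empty (not_lt.2 h.le)]
    simp

lemma haar_mul (n l : ℕ) (f : ℝ → ℝ) (u : ℝ) :
    Haar n l u * f u = (2:ℝ) ^ ((n:ℝ)/2) *
      ((Ioc ((l:ℝ)/2^n) (((l:ℝ)+0.5)/2^n)).indicator f u
        - (Ioc (((l:ℝ)+0.5)/2^n) (((l:ℝ)+1)/2^n)).indicator f u) := by
  unfold Haar
  split_ifs with h1 h2
  · have hn : u ∉ Ioc (((l:ℝ)+0.5)/2^n) (((l:ℝ)+1)/2^n) := fun h => absurd h1.2 (not_le.2 h.1)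
    rw [Set.indicator_of_mem h1, Set.indicator_of_notMem hn]
    ring
  · rw [Set.indicator_of_notMem h1, Set.indicator_of_mem h2]
    ring
  · rw [Set.indicator_of_notMem h1, Set.indicator_of_notMem h2]
    ring


theorem integral_Haar_mul_FS (m k n l : ℕ) (hk : k < 2 ^ m) (hl : l < 2 ^ n)
    (t : ℝ) (ht : t ∈ Set.Icc (0 : ℝ) 1) :
    ∫ u in (0 : ℝ)..t, Haar n l u * FS m k u =
      (2 : ℝ) ^ ((n : ℝ) / 2) *
        (2 * I2 (Haar m k) (min t (((l : ℝ) + 0.5) / 2 ^ n))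
          - I2 (Haar m k) (min t ((l : ℝ) / 2 ^ n))
          - I2 (Haar m k) (min t (((l : ℝ) + 1) / 2 ^ n))) := by
  obtain ⟨ht0, ht1⟩ := ht
  set a : ℝ := (l:ℝ)/2^n with ha_def
  set b : ℝ := ((l:ℝ)+0.5)/2^n with hb_def
  set c : ℝ := ((l:ℝ)+1)/2^n with hc_def
  have ha : (0:ℝ) ≤ a := by positivity
  have hab : a ≤ b := by rw [ha_def, hb_def]; gcongr; norm_num
  have hb : (0:ℝ) ≤ b := ha.trans hab
  have hbc : b ≤ c := by rw [hb_def, hc_def]; gcongr; norm_num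
  have hi1 : IntervalIntegrable ((Ioc a b).indicator (FS m k)) volume 0 t := by
    rw [intervalIntegrable_iff]
    have := ((fs_continuous m k).intervalIntegrable (μ := volume) 0 t)
    rw [intervalIntegrable_iff] at this
    exact this.indicator measurableSet_Ioc
  have hi2 : IntervalIntegrable ((Ioc b c).indicator (FS m k)) volume 0 t := by
    rw [intervalIntegrable_iff]
    have := ((fs_continuous m k).intervalIntegrable (μ := volume) 0 t)
    rw [intervalIntegrable_iff] at this
    exact this.indicator measurableSet_Ioc
  have heq : ∀ u, Haar n l u * FS m k u = (2:ℝ) ^ ((n:ℝ)/2) *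
      ((Ioc a b).indicator (FS m k) u - (Ioc b c).indicator (FS m k) u) :=
    fun u => haar_mul n l (FS m k) u
  rw [intervalIntegral.integral_congr (g := fun u => (2:ℝ) ^ ((n:ℝ)/2) *
      ((Ioc a b).indicator (FS m k) u - (Ioc b c).indicator (FS m k) u))
      (fun u _ => heq u)]
  rw [intervalIntegral.integral_const_mul, intervalIntegral.integral_sub hi1 hi2,
    step m k a b t ha hab ht0, step m k b c t hb hbc ht0,
    key m k _ (le_min ht0 ha), key m k _ (le_min ht0 hb),
    key m k _ (le_min ht0 (hb.trans hbc))]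
  ring
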